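/- For every j ∈ ℤ the weight space g(j) decomposes as the internal direct sum g(j) = [e, g(j-2)] ⊕ (ker(ad f) ∩ g(j)); in particular ker(ad f) ∩ g(j) = 0 whenever j ≥ 1. -/

import Mathlib

open LieAlgebra Module

section Aux

variable {K : Type*} [Field K] [CharZero K]
  {g : Type*} [LieRing g] [LieAlgebra K g] [FiniteDimensional K g]

/-- Key chain lemma: if `y ≠ 0`, `⁅h,y⁆ = μ • y` and `⁅f,⁅e,y⁆⁆ = 0`, then `μ` is a
natural number. -/
private lemma key_chain (h e f : g)
    (hhe : ⁅h, e⁆ = (2 : K) • e) (hhf : ⁅h, f⁆ = (-2 : K) • f) (hef : ⁅e, f⁆ = h)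
    {μ : K} {y : g} (hy : y ≠ 0) (hμ : ⁅h, y⁆ = μ • y) (h0 : ⁅f, ⁅e, y⁆⁆ = 0) :
    ∃ l : ℕ, μ = l := by
  set Y : ℕ → g := fun k => ((ad K g f) ^ k) y with hY
  have hY0 : Y 0 = y := rfl
  have hYs : ∀ k, Y (k + 1) = ⁅f, Y k⁆ := by
    intro k
    simp [hY, pow_succ', ad_apply]
  -- the invariants along the chain
  have main : ∀ k : ℕ, ⁅h, Y k⁆ = (μ - 2 * k) • Y k ∧
      ⁅f, ⁅e, Y k⁆⁆ = ((k : K) * μ - k * (k - 1)) • Y k := by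
    intro k
    induction k with
    | zero => simpa [hY0] using ⟨by simpa using hμ, by simpa using h0⟩
    | succ k ih =>
      obtain ⟨ih1, ih2⟩ := ih
      have hE : ⁅e, Y (k + 1)⁆ = ((μ - 2 * k) + ((k : K) * μ - k * (k - 1))) • Y k := by
        rw [hYs k, leibniz_lie, hef, ih1, ih2, ← add_smul]
      constructor
      · rw [hYs k, leibniz_lie, hhf, ih1, lie_smul, smul_lie, ← hYs k]
        push_cast
        rw [← add_smul]
        ring_nf
      · rw [hE, lie_smul, hYs k]
        push_cast
        ring_nf
  -- the chain terminates
  have hterm : ∃ k, Y k = 0 := by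
    by_contra! contra
    have hind : LinearIndependent K Y := by
      refine (ad K g h).eigenvectors_linearIndependent' (fun k : ℕ => μ - 2 * k) ?_ Y ?_
      · intro a b hab
        field_simp at hab
        have h' : (a : K) = b := by linear_combination (-(1 : K) / 2) * hab
        exact_mod_cast h'
      · intro k
        exact ⟨Module.End.mem_eigenspace_iff.mpr (by simpa [ad_apply] using (main k).1),
          contra k⟩
    have hcard := (hind.comp ((↑) : Fin (Module.finrank K g + 1) → ℕ)
      Fin.val_injective).fintype_card_le_finrank
    simp at hcard
  -- take the last nonzero element of the chain
  obtain ⟨l, hl1, hl2⟩ := Nat.exists_not_and_succ_of_not_zero_of_exists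
    (p := fun k => Y k = 0) (by simpa [hY0] using hy) hterm
  refine ⟨l, ?_⟩
  have h1 : ⁅f, Y l⁆ = 0 := by rw [← hYs l]; exact hl2
  have h2 : (0 : g) = ((μ - 2 * l) + ((l : K) * μ - l * (l - 1))) • Y l := by
    have := congrArg (fun z => ⁅e, z⁆) h1
    simp only [lie_zero] at this
    rw [leibniz_lie, hef, (main l).1, (main l).2, ← add_smul] at this
    exact this.symm
  have h3 : (μ - 2 * l) + ((l : K) * μ - l * (l - 1)) = 0 := by
    rcases smul_eq_zero.mp h2.symm with h | h
    · exact h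
    · exact absurd h hl1
  have h4 : ((l : K) + 1) * μ = ((l : K) + 1) * l := by linear_combination h3
  exact mul_left_cancel₀ (Nat.cast_add_one_ne_zero l) h4


/-- `ker (ad f) ∩ g(j) = 0` for `j ≥ 1`. -/
private lemma ker_inf_eq_bot (h e f : g)
    (hhe : ⁅h, e⁆ = (2 : K) • e) (hhf : ⁅h, f⁆ = (-2 : K) • f) (hef : ⁅e, f⁆ = h)
    (j : ℤ) (hj : 1 ≤ j) :
    LinearMap.ker (ad K g f) ⊓ Module.End.eigenspace (ad K g h) (j : K) = ⊥ := by
  rw [eq_bot_iff]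
  rintro x ⟨hx1, hx2⟩
  simp only [Submodule.mem_bot]
  by_contra hxne
  have hfx : ⁅f, x⁆ = 0 := by simpa [ad_apply] using hx1
  have hhx : ⁅h, x⁆ = ((j : ℤ) : K) • x := by
    simpa [ad_apply] using Module.End.mem_eigenspace_iff.mp hx2
  obtain ⟨l, hl⟩ := key_chain (-h) f e
    (by rw [neg_lie, hhf]; module) (by rw [neg_lie, hhe]; module)
    (by rw [← lie_skew, hef]) (μ := -((j : ℤ) : K)) hxne
    (by rw [neg_lie, hhx]; module) (by rw [hfx, lie_zero])
  have : -(j : ℤ) = (l : ℤ) := by exact_mod_cast hl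
  omega

/-- If `y ∈ g(j-2)` and `⁅f, ⁅e, y⁆⁆ = 0` then `⁅e, y⁆ = 0`. -/
private lemma lie_e_eq_zero (h e f : g)
    (hhe : ⁅h, e⁆ = (2 : K) • e) (hhf : ⁅h, f⁆ = (-2 : K) • f) (hef : ⁅e, f⁆ = h)
    (j : ℤ) (y : g) (hy : ⁅h, y⁆ = (((j : ℤ) : K) - 2) • y) (h0 : ⁅f, ⁅e, y⁆⁆ = 0) :
    ⁅e, y⁆ = 0 := by
  by_cases hy0 : y = 0
  · simp [hy0]
  obtain ⟨l, hl⟩ := key_chain h e f hhe hhf hef hy0 hy h0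
  have hj : j = (l : ℤ) + 2 := by
    have : ((j : ℤ) : K) = ((l : ℤ) : K) + 2 := by push_cast; linear_combination hl
    exact_mod_cast this
  have hj1 : 1 ≤ j := by omega
  have hmem : ⁅e, y⁆ ∈ LinearMap.ker (ad K g f) ⊓
      Module.End.eigenspace (ad K g h) ((j : ℤ) : K) := by
    refine ⟨by simpa [ad_apply] using h0, Module.End.mem_eigenspace_iff.mpr ?_⟩
    rw [ad_apply, leibniz_lie, hhe, hy, lie_smul, smul_lie]
    module
  have := ker_inf_eq_bot h e f hhe hhf hef j hj1
  simpa [this] using hmem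

/-- If `w ∈ g(j)` and `⁅e, ⁅f, w⁆⁆ = 0` then `⁅f, w⁆ = 0`. -/
private lemma lie_f_eq_zero (h e f : g)
    (hhe : ⁅h, e⁆ = (2 : K) • e) (hhf : ⁅h, f⁆ = (-2 : K) • f) (hef : ⁅e, f⁆ = h)
    (j : ℤ) (w : g) (hw : ⁅h, w⁆ = ((j : ℤ) : K) • w) (h0 : ⁅e, ⁅f, w⁆⁆ = 0) :
    ⁅f, w⁆ = 0 := by
  refine lie_e_eq_zero (K := K) (-h) f e
    (by rw [neg_lie, hhf]; module) (by rw [neg_lie, hhe]; module)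
    (by rw [← lie_skew, hef]) (2 - j) w ?_ h0
  rw [neg_lie, hw]
  push_cast
  module

end Aux


/-- For every `j ∈ ℤ` the weight space `g(j)` decomposes as the internal direct
sum `g(j) = [e, g(j-2)] ⊕ (ker(ad f) ∩ g(j))`; in particular `ker(ad f) ∩ g(j) = 0` whenever
`j ≥ 1`. -/
theorem weight_space_decomposition
    (K : Type*) [Field K] [IsAlgClosed K] [CharZero K]
    (g : Type*) [LieRing g] [LieAlgebra K g] [FiniteDimensional K g]
    [LieAlgebra.IsSemisimple K g]
    (e h f : g) (he : e ≠ 0)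
    (hhe : ⁅h, e⁆ = (2 : K) • e) (hhf : ⁅h, f⁆ = (-2 : K) • f) (hef : ⁅e, f⁆ = h) :
    (∀ j : ℤ,
      Submodule.map (LieAlgebra.ad K g e)
          (Module.End.eigenspace (LieAlgebra.ad K g h) ((j - 2 : ℤ) : K)) ⊔
        (LinearMap.ker (LieAlgebra.ad K g f) ⊓
          Module.End.eigenspace (LieAlgebra.ad K g h) (j : K)) =
        Module.End.eigenspace (LieAlgebra.ad K g h) (j : K) ∧
      Submodule.map (LieAlgebra.ad K g e)
          (Module.End.eigenspace (LieAlgebra.ad K g h) ((j - 2 : ℤ) : K)) ⊓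
        (LinearMap.ker (LieAlgebra.ad K g f) ⊓
          Module.End.eigenspace (LieAlgebra.ad K g h) (j : K)) = ⊥) ∧
    (∀ j : ℤ, 1 ≤ j →
      LinearMap.ker (LieAlgebra.ad K g f) ⊓
        Module.End.eigenspace (LieAlgebra.ad K g h) (j : K) = ⊥) := by
  classical
  set H := ad K g h with hH
  set E := ad K g e with hE
  set F := ad K g f with hF
  -- weight computations
  have weightE : ∀ (j : ℤ) (y : g), y ∈ Module.End.eigenspace H (((j - 2 : ℤ)) : K) →
      ⁅e, y⁆ ∈ Module.End.eigenspace H ((j : ℤ) : K) := by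
    intro j y hy
    have hy' : ⁅h, y⁆ = (((j : ℤ) : K) - 2) • y := by
      have := Module.End.mem_eigenspace_iff.mp hy
      push_cast at this
      simpa [hH, ad_apply] using this
    refine Module.End.mem_eigenspace_iff.mpr ?_
    rw [hH, ad_apply, leibniz_lie, hhe, hy', lie_smul, smul_lie]
    module
  have weightF : ∀ (j : ℤ) (w : g), w ∈ Module.End.eigenspace H ((j : ℤ) : K) →
      ⁅f, w⁆ ∈ Module.End.eigenspace H (((j - 2 : ℤ)) : K) := by
    intro j w hw
    have hw' : ⁅h, w⁆ = ((j : ℤ) : K) • w :=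
      by simpa [hH, ad_apply] using Module.End.mem_eigenspace_iff.mp hw
    refine Module.End.mem_eigenspace_iff.mpr ?_
    rw [hH, ad_apply, leibniz_lie, hhf, hw', lie_smul, smul_lie]
    push_cast
    module
  refine ⟨fun j => ⟨?_, ?_⟩, fun j hj => ker_inf_eq_bot h e f hhe hhf hef j hj⟩
  · -- the sup
    apply le_antisymm
    · refine sup_le ?_ inf_le_right
      rintro x ⟨y, hy, rfl⟩
      exact weightE j y (by simpa using hy)
    · -- hard direction
      intro x hx
      set U : Submodule K g := Submodule.map F (Module.End.eigenspace H ((j : ℤ) : K)) with hU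
      have hUle : U ≤ Module.End.eigenspace H (((j - 2 : ℤ)) : K) := by
        rintro u ⟨w, hw, rfl⟩
        exact weightF j w hw
      have hmapsto : ∀ u ∈ U, (F ∘ₗ E) u ∈ U := by
        intro u hu
        have : (F ∘ₗ E) u = F ⁅e, u⁆ := by simp [hE, ad_apply]
        rw [this]
        exact Submodule.mem_map_of_mem (weightE j u (hUle hu))
      set φ : U →ₗ[K] U := (F ∘ₗ E).restrict hmapsto with hφ
      have hinj : Function.Injective φ := by
        rw [← LinearMap.ker_eq_bot, eq_bot_iff]
        rintro ⟨u, hu⟩ hker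
        have h1 : ⁅f, ⁅e, u⁆⁆ = 0 := by
          have : ((F ∘ₗ E) u : g) = 0 := by
            have := congrArg (Subtype.val) (LinearMap.mem_ker.mp hker)
            simpa [hφ, LinearMap.restrict_apply] using this
          simpa [hF, hE, ad_apply] using this
        have hu' : ⁅h, u⁆ = (((j : ℤ) : K) - 2) • u := by
          have := Module.End.mem_eigenspace_iff.mp (hUle hu)
          push_cast at this
          simpa [hH, ad_apply] using this
        have h2 : ⁅e, u⁆ = 0 := lie_e_eq_zero h e f hhe hhf hef j u hu' h1
        obtain ⟨w, hw, rfl⟩ := hu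
        have hw' : ⁅h, w⁆ = ((j : ℤ) : K) • w := by
          simpa [hH, ad_apply] using Module.End.mem_eigenspace_iff.mp hw
        have h3 : ⁅f, w⁆ = 0 := by
          refine lie_f_eq_zero h e f hhe hhf hef j w hw' ?_
          simpa [hF, ad_apply] using h2
        simp only [Submodule.mem_bot]
        exact Subtype.ext (by simpa [hF, ad_apply] using h3)
      have hsurj : Function.Surjective φ := LinearMap.injective_iff_surjective.mp hinj
      have hFx : (⟨F x, Submodule.mem_map_of_mem hx⟩ : U) ∈ Set.range φ := hsurj _
      obtain ⟨⟨u, hu⟩, hu'⟩ := hFx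
      have hu'' : F (E u) = F x := by
        have := congrArg Subtype.val hu'
        simpa [hφ, LinearMap.restrict_apply] using this
      rw [Submodule.mem_sup]
      refine ⟨E u, Submodule.mem_map_of_mem (by simpa using hUle hu),
        x - E u, ⟨?_, ?_⟩, by module⟩
      · simp only [SetLike.mem_coe, LinearMap.mem_ker, map_sub, hu'', sub_self]
      · exact Submodule.sub_mem _ hx (weightE j u (hUle hu))
  · -- the inf
    rw [eq_bot_iff]
    rintro x ⟨⟨y, hy, rfl⟩, hker, hmem⟩
    simp only [Submodule.mem_bot]
    have hy' : ⁅h, y⁆ = (((j : ℤ) : K) - 2) • y := by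
      have := Module.End.mem_eigenspace_iff.mp hy
      push_cast at this
      simpa [hH, ad_apply] using this
    have h0 : ⁅f, ⁅e, y⁆⁆ = 0 := by
      have := LinearMap.mem_ker.mp hker
      have h2 : ⁅f, (ad K g e) y⁆ = 0 := by simpa [hF, hE, ad_apply] using this
      simpa [ad_apply] using h2
    simpa [hE, ad_apply] using lie_e_eq_zero h e f hhe hhf hef j y hy' h0
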